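/- Let α ∈ (0,1) and t ∈ ℕ. Then: (i) Σ_{s∈ℕ} α^(max(s,t)) = (t + 1/(1−α))·α^t; (ii) for every γ ∈ (−α^(−1/2), α^(−1/2)) with γ ≠ 1, Σ_{s∈ℕ} α^(max(s,t))·γ^(|s−t|) = ((γ − γ^(t+1))/(1−γ) + 1/(1−αγ))·α^t; (iii) Σ_{s∈ℕ} (α^(max(s,t)+s+t) − (1/3)·α^(3·max(s,t))) = ((1 + α − α^(t+1))/(1−α²) − α^t/(3(1−α³)) − t·α^t/3)·α^(2t). -/

import Mathlib

lemma sum_pow_sub_eq (γ : ℝ) : ∀ t : ℕ,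
    ∑ i ∈ Finset.range t, γ ^ (t - i) = γ * ∑ i ∈ Finset.range t, γ ^ i := by
  intro t
  induction t with
  | zero => simp
  | succ n ih =>
    rw [Finset.sum_range_succ' (fun i => γ ^ (n + 1 - i)) n]
    simp only [Nat.succ_sub_succ]
    rw [ih, Finset.sum_range_succ, Nat.sub_zero]
    ring

lemma phi0_aux (α x c : ℝ) (h1 : α - 1 ≠ 0) (h2 : (1:ℝ) - α ^ 2 ≠ 0)
    (h3 : (1:ℝ) - α ^ 3 ≠ 0) :
    x * x * x * (1 - α ^ 2)⁻¹ - 1 / 3 * (x * x * x) * (1 - α ^ 3)⁻¹ +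
        (x * x * ((x - 1) / (α - 1)) - c * (x * x * x) / 3) =
      ((1 + α - x * α) / (1 - α ^ 2) - x / (3 * (1 - α ^ 3)) - c * x / 3) * (x * x) := by
  field_simp
  ring

/-- Steady-state gain representers `φ₀(t)` for the discrete-time TC, DC and
SS kernels:
(i) `∑_{s∈ℕ} α^(max(s,t)) = (t + 1/(1−α))·α^t`;
(ii) `∑_{s∈ℕ} α^(max(s,t))·γ^(dist(s,t)) = ((γ − γ^(t+1))/(1−γ) + 1/(1−αγ))·α^t` for
`γ ∈ (−α^(−1/2), α^(−1/2))`, `γ ≠ 1`;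
(iii) `∑_{s∈ℕ} (α^(max(s,t)+s+t) − (1/3)α^(3 max(s,t)))
        = ((1 + α − α^(t+1))/(1−α²) − α^t/(3(1−α³)) − t·α^t/3)·α^(2t)`. -/
theorem phi0_TC_DC_SS_discrete
    (α : ℝ) (hα : α ∈ Set.Ioo (0 : ℝ) 1) (t : ℕ) :
    (∑' s : ℕ, α ^ max s t = ((t : ℝ) + 1 / (1 - α)) * α ^ t) ∧
    (∀ γ : ℝ, γ ∈ Set.Ioo (-(α ^ (-1/2 : ℝ))) (α ^ (-1/2 : ℝ)) → γ ≠ 1 →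
      ∑' s : ℕ, α ^ max s t * γ ^ Nat.dist s t =
        ((γ - γ ^ (t + 1)) / (1 - γ) + 1 / (1 - α * γ)) * α ^ t) ∧
    (∑' s : ℕ, (α ^ (max s t + s + t) - (1/3) * α ^ (3 * max s t)) =
      ((1 + α - α ^ (t + 1)) / (1 - α ^ 2) - α ^ t / (3 * (1 - α ^ 3)) -
          (t : ℝ) * α ^ t / 3) * α ^ (2 * t)) := by
  obtain ⟨hα0, hα1⟩ := hα
  have h1α : (1 : ℝ) - α ≠ 0 := by nlinarith
  have hα1' : α ≠ 1 := ne_of_lt hα1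
  refine ⟨?_, ?_, ?_⟩
  · -- part (i)
    have htail : HasSum (fun n : ℕ => (fun s => α ^ max s t) (n + t)) (α ^ t * (1 - α)⁻¹) := by
      have h := (hasSum_geometric_of_lt_one hα0.le hα1).mul_left (α ^ t)
      convert h using 2 with n
      show α ^ max (n + t) t = α ^ t * α ^ n
      rw [max_eq_left (Nat.le_add_left t n), pow_add]
      ring
      rfl
    have h := (hasSum_nat_add_iff (f := fun s => α ^ max s t) t).mp htail
    rw [h.tsum_eq]
    have hfin : ∑ i ∈ Finset.range t, α ^ max i t = (t : ℝ) * α ^ t := by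
      rw [Finset.sum_congr rfl (fun i hi => by
        rw [max_eq_right (le_of_lt (Finset.mem_range.mp hi))]),
        Finset.sum_const, Finset.card_range, nsmul_eq_mul]
    rw [hfin]
    field_simp
    ring
  · -- part (ii)
    intro γ hγ hγ1
    have hγabs : |γ| < α ^ (-1/2 : ℝ) := abs_lt.mpr ⟨hγ.1, hγ.2⟩
    have hkey : |α * γ| < 1 := by
      rw [abs_mul, abs_of_pos hα0]
      have h1 : α * |γ| < α * α ^ (-1/2 : ℝ) := by
        exact (mul_lt_mul_iff_right₀ hα0).mpr hγabs
      have h2 : α * α ^ (-1/2 : ℝ) = α ^ (1/2 : ℝ) := by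
        nth_rewrite 1 [← Real.rpow_one α]
        rw [← Real.rpow_add hα0]
        norm_num
      have h3 : α ^ (1/2 : ℝ) < 1 := Real.rpow_lt_one hα0.le hα1 (by norm_num)
      calc α * |γ| < α * α ^ (-1/2 : ℝ) := h1
        _ = α ^ (1/2 : ℝ) := h2
        _ < 1 := h3
    have h1αγ : (1 : ℝ) - α * γ ≠ 0 := by
      intro h
      have : α * γ = 1 := by linarith
      rw [this] at hkey; simp at hkey
    have h1γ : (1 : ℝ) - γ ≠ 0 := fun h => hγ1 (by linarith)
    have htail : HasSum (fun n : ℕ => (fun s => α ^ max s t * γ ^ Nat.dist s t) (n + t))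
        (α ^ t * (1 - α * γ)⁻¹) := by
      have h := (hasSum_geometric_of_norm_lt_one (ξ := α * γ)
        (by rwa [Real.norm_eq_abs])).mul_left (α ^ t)
      convert h using 2 with n
      show α ^ max (n + t) t * γ ^ Nat.dist (n + t) t = α ^ t * (α * γ) ^ n
      have hd : Nat.dist (n + t) t = n := by simp [Nat.dist]
      rw [max_eq_left (Nat.le_add_left t n), hd, pow_add, mul_pow]
      ring
      rfl
    have h := (hasSum_nat_add_iff (f := fun s => α ^ max s t * γ ^ Nat.dist s t) t).mp htail
    rw [h.tsum_eq]
    have hfin : ∑ i ∈ Finset.range t, α ^ max i t * γ ^ Nat.dist i t =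
        α ^ t * (γ * ∑ i ∈ Finset.range t, γ ^ i) := by
      rw [← sum_pow_sub_eq, Finset.mul_sum]
      refine Finset.sum_congr rfl (fun i hi => ?_)
      have hit := le_of_lt (Finset.mem_range.mp hi)
      have hd : Nat.dist i t = t - i := by simp [Nat.dist, Nat.sub_eq_zero_of_le hit]
      rw [max_eq_right hit, hd]
    rw [hfin, geom_sum_eq hγ1]
    have hγ1'' : γ - 1 ≠ 0 := fun h => hγ1 (by linarith)
    field_simp
    ring
  · -- part (iii)
    have hα2 : (0:ℝ) ≤ α ^ 2 := by positivity
    have hα2' : α ^ 2 < 1 := by nlinarith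
    have hα3 : (0:ℝ) ≤ α ^ 3 := by positivity
    have hα3' : α ^ 3 < 1 := by nlinarith
    have h1α2 : (1:ℝ) - α ^ 2 ≠ 0 := by nlinarith
    have h1α3 : (1:ℝ) - α ^ 3 ≠ 0 := by nlinarith
    have htail : HasSum
        (fun n : ℕ => (fun s => α ^ (max s t + s + t) - (1/3) * α ^ (3 * max s t)) (n + t))
        (α ^ (3 * t) * (1 - α ^ 2)⁻¹ - 1/3 * α ^ (3 * t) * (1 - α ^ 3)⁻¹) := by
      have h2 := (hasSum_geometric_of_lt_one hα2 hα2').mul_left (α ^ (3 * t))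
      have h3 := (hasSum_geometric_of_lt_one hα3 hα3').mul_left (1/3 * α ^ (3 * t))
      convert h2.sub h3 using 2 with n
      show α ^ (max (n + t) t + (n + t) + t) - 1/3 * α ^ (3 * max (n + t) t) =
        α ^ (3 * t) * (α ^ 2) ^ n - 1/3 * α ^ (3 * t) * (α ^ 3) ^ n
      rw [max_eq_left (Nat.le_add_left t n)]
      have e1 : n + t + (n + t) + t = 2 * n + 3 * t := by ring
      have e2 : 3 * (n + t) = 3 * n + 3 * t := by ring
      rw [e1, e2, pow_add, pow_add, pow_mul, pow_mul]
      ring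
      rfl
    have h := (hasSum_nat_add_iff (f := fun s => α ^ (max s t + s + t) - (1/3) * α ^ (3 * max s t)) t).mp htail
    rw [h.tsum_eq]
    have hfin : ∑ i ∈ Finset.range t, (α ^ (max i t + i + t) - (1/3) * α ^ (3 * max i t)) =
        α ^ (2 * t) * ((α ^ t - 1) / (α - 1)) - (t : ℝ) * α ^ (3 * t) / 3 := by
      have : ∀ i ∈ Finset.range t, (α ^ (max i t + i + t) - (1/3) * α ^ (3 * max i t)) =
          α ^ (2 * t) * α ^ i - (1/3) * α ^ (3 * t) := by
        intro i hi
        have hit := le_of_lt (Finset.mem_range.mp hi)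
        rw [max_eq_right hit]
        congr 1
        · rw [← pow_add]; congr 1; ring
      rw [Finset.sum_congr rfl this, Finset.sum_sub_distrib, ← Finset.mul_sum,
        Finset.sum_const, Finset.card_range, geom_sum_eq hα1', nsmul_eq_mul]
      ring
    rw [hfin]
    have e2 : α ^ (2 * t) = α ^ t * α ^ t := by rw [two_mul, pow_add]
    have e3 : α ^ (3 * t) = α ^ t * α ^ t * α ^ t := by
      rw [show 3 * t = t + t + t by ring, pow_add, pow_add]
    have hαm1 : α - 1 ≠ 0 := fun h => hα1' (by linarith)
    rw [e2, e3, pow_succ]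
    exact phi0_aux α (α ^ t) (t : ℝ) hαm1 h1α2 h1α3
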